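/- arXiv:2010.01501 — 2 statements merged into one kernel-verified Lean document; each statement's English description precedes it below -/
import Mathlib

section
/- Let I be a finite set, and for each i ∈ I let 𝒰ᵢ be a set of infinite-dimensional Banach spaces and Xᵢ a 𝒰ᵢ-subprojective Banach space. Then the direct sum ⊕_{i∈I} Xᵢ (with the max norm) is 𝒰-subprojective, where 𝒰 = ⋃_{i∈I} 𝒰ᵢ. -/
open Filter Topology Metric

section Helpers

variable {E : Type*} [NormedAddCommGroup E] [NormedSpace ℝ E]


lemma norming_finset (F : Submodule ℝ E) (hF : FiniteDimensional ℝ F) :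
    ∃ G : Finset (E →L[ℝ] ℝ), (∀ f ∈ G, ‖f‖ ≤ 1) ∧
      ∀ y ∈ F, ∃ f ∈ G, ‖y‖ ≤ 2 * ‖f y‖ := by
  classical
  have hS : IsCompact ((↑) '' (sphere (0 : F) 1) : Set E) :=
    (isCompact_sphere (0 : F) 1).image continuous_subtype_val
  set S : Set E := (↑) '' (sphere (0 : F) 1) with hSdef
  have hcover : S ⊆ ⋃ y ∈ S, ball y (1/2) := fun y hy =>
    Set.mem_biUnion hy (mem_ball_self (by norm_num))
  obtain ⟨t, hts, htfin, htcover⟩ :=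
    hS.elim_finite_subcover_image (fun y _ => isOpen_ball) hcover
  have hnorm1 : ∀ y ∈ t, ‖y‖ = 1 := by
    intro y hy
    obtain ⟨z, hz, rfl⟩ := hts hy
    simpa using mem_sphere_zero_iff_norm.mp hz
  have hdual : ∀ y ∈ t, ∃ g : E →L[ℝ] ℝ, ‖g‖ = 1 ∧ g y = ‖y‖ := by
    intro y hy
    exact exists_dual_vector ℝ y (by rw [← norm_ne_zero_iff, hnorm1 y hy]; norm_num)
  choose! g hg1 hg2 using hdual
  set G : Finset (E →L[ℝ] ℝ) := insert 0 (htfin.toFinset.image g) with hGdef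
  refine ⟨G, ?_, ?_⟩
  · intro f hf
    rw [hGdef, Finset.mem_insert] at hf
    rcases hf with rfl | hf
    · simp
    · obtain ⟨y, hy, rfl⟩ := Finset.mem_image.mp hf
      rw [Set.Finite.mem_toFinset] at hy
      exact le_of_eq (hg1 y hy)
  · intro y hyF
    rcases eq_or_ne y 0 with rfl | hy0
    · exact ⟨0, by simp [hGdef], by simp⟩
    · set z : E := ‖y‖⁻¹ • y with hzdef
      have hzS : z ∈ S := by
        refine ⟨⟨z, F.smul_mem _ hyF⟩, ?_, rfl⟩
        rw [mem_sphere_zero_iff_norm]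
        have : ‖z‖ = 1 := by
          rw [hzdef, norm_smul, norm_inv, norm_norm,
            inv_mul_cancel₀ (norm_ne_zero_iff.mpr hy0)]
        simpa [Submodule.coe_norm] using this
      obtain ⟨w, hwt, hzw⟩ := Set.mem_iUnion₂.mp (htcover hzS)
      refine ⟨g w, ?_, ?_⟩
      · simp only [hGdef, Finset.mem_insert, Finset.mem_image, Set.Finite.mem_toFinset]
        exact Or.inr ⟨w, hwt, rfl⟩
      have hgz : (1:ℝ)/2 ≤ ‖g w z‖ := by
        have h1 : g w z = g w w + g w (z - w) := by rw [← map_add]; congr 1; abel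
        have h2 : ‖g w (z - w)‖ ≤ ‖z - w‖ := by
          calc ‖g w (z - w)‖ ≤ ‖g w‖ * ‖z - w‖ := (g w).le_opNorm _
          _ ≤ ‖z - w‖ := by rw [hg1 w hwt]; ring_nf; exact le_rfl
        have h3 : ‖z - w‖ < 1/2 := by rw [← dist_eq_norm]; exact mem_ball.mp hzw
        have h4 : g w w = 1 := by rw [hg2 w hwt, hnorm1 w hwt]
        calc (1:ℝ)/2 = 1 - 1/2 := by norm_num
        _ ≤ ‖g w w‖ - ‖g w (z - w)‖ := by
            rw [h4]; simp only [norm_one]; linarith [h2.trans h3.le]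
        _ ≤ ‖g w w + g w (z-w)‖ := by
            have := norm_add_le (g w w + g w (z-w)) (-(g w (z-w)))
            simp only [add_neg_cancel_right, norm_neg] at this; linarith
        _ = ‖g w z‖ := by rw [← h1]
      have hgy : g w y = ‖y‖ * g w z := by
        rw [hzdef, map_smul, smul_eq_mul]
        field_simp
      rw [hgy]
      have : ‖(‖y‖ * g w z)‖ = ‖y‖ * ‖g w z‖ := by
        rw [norm_mul, norm_norm]
      rw [this]
      nlinarith [norm_nonneg y, hgz]

lemma inf_ker_infdim (M : Submodule ℝ E) (hM : ¬ FiniteDimensional ℝ M)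
    (G : Finset (E →L[ℝ] ℝ)) :
    ¬ FiniteDimensional ℝ ↥(M ⊓ ⨅ f ∈ G, LinearMap.ker (f : E →ₗ[ℝ] ℝ)) := by
  intro hfin
  apply hM
  set K : Submodule ℝ E := ⨅ f ∈ G, LinearMap.ker (f : E →ₗ[ℝ] ℝ) with hK
  set Φ : M →ₗ[ℝ] ({f // f ∈ G} → ℝ) :=
    LinearMap.pi (fun f => ((f.1 : E →ₗ[ℝ] ℝ)).comp M.subtype) with hΦ
  have hker : LinearMap.ker Φ = Submodule.comap M.subtype (M ⊓ K) := by
    ext x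
    simp [hΦ, LinearMap.mem_ker, Submodule.mem_comap, hK, funext_iff,
      Submodule.mem_iInf, x.2]
  have h1 : Module.rank ℝ (LinearMap.range Φ) < Cardinal.aleph0 := by
    have inst1 : FiniteDimensional ℝ ({f // f ∈ G} → ℝ) := inferInstance
    have : FiniteDimensional ℝ (LinearMap.range Φ) :=
      FiniteDimensional.finiteDimensional_submodule _
    exact Module.rank_lt_aleph0 ℝ _
  have h2 : Module.rank ℝ (LinearMap.ker Φ) < Cardinal.aleph0 := by
    have e := (Submodule.comapSubtypeEquivOfLe (inf_le_left : M ⊓ K ≤ M))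
    rw [hker]
    have : FiniteDimensional ℝ ↥(Submodule.comap M.subtype (M ⊓ K)) :=
      Module.Finite.equiv e.symm
    exact Module.rank_lt_aleph0 ℝ _
  have := LinearMap.rank_range_add_rank_ker Φ
  have : Module.rank ℝ M < Cardinal.aleph0 := by
    rw [← this]; exact Cardinal.add_lt_aleph0 h1 h2
  exact Module.rank_lt_aleph0_iff.mp this

lemma small_subspace {E' : Type*} [NormedAddCommGroup E'] [NormedSpace ℝ E']
    (V : Submodule ℝ E) (T : E →L[ℝ] E')
    (H : ∀ N : Submodule ℝ E, N ≤ V → ¬FiniteDimensional ℝ N →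
      ∀ c : ℝ, 0 < c → ∃ x ∈ N, ‖T x‖ < c * ‖x‖)
    (M : Submodule ℝ E) (hMV : M ≤ V) (hM : ¬FiniteDimensional ℝ M)
    (ε : ℝ) (hε : 0 < ε) :
    ∃ M' : Submodule ℝ E, M' ≤ M ∧ ¬FiniteDimensional ℝ M' ∧
      ∀ x ∈ M', ‖T x‖ ≤ ε * ‖x‖ := by
  classical
  -- one construction step
  have step : ∀ (n : ℕ) (F K : Submodule ℝ E), FiniteDimensional ℝ F →
      ¬FiniteDimensional ℝ ↥(M ⊓ K) →
      ∃ (x : E) (F' K' : Submodule ℝ E),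
        x ∈ M ⊓ K ∧ ‖x‖ = 1 ∧ ‖T x‖ ≤ ε / 2 ^ (n + 3) ∧
        F' = F ⊔ Submodule.span ℝ {x} ∧ K' ≤ K ∧
        FiniteDimensional ℝ F' ∧ ¬FiniteDimensional ℝ ↥(M ⊓ K') ∧
        (∀ y ∈ F', ∀ v ∈ K', ‖y‖ ≤ 2 * ‖y + v‖) := by
    intro n F K hF hMK
    have hδ : (0:ℝ) < ε / 2 ^ (n + 3) := by positivity
    obtain ⟨x₀, hx₀mem, hx₀⟩ := H (M ⊓ K) (le_trans inf_le_left hMV) hMK _ hδ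
    have hx₀ne : x₀ ≠ 0 := by
      rintro rfl
      simp at hx₀
    set x : E := ‖x₀‖⁻¹ • x₀ with hxdef
    have hxmem : x ∈ M ⊓ K := Submodule.smul_mem _ _ hx₀mem
    have hxnorm : ‖x‖ = 1 := by
      rw [hxdef, norm_smul, norm_inv, norm_norm,
        inv_mul_cancel₀ (norm_ne_zero_iff.mpr hx₀ne)]
    have hTx : ‖T x‖ ≤ ε / 2 ^ (n + 3) := by
      rw [hxdef, map_smul, norm_smul, norm_inv, norm_norm]
      rw [inv_mul_le_iff₀ (norm_pos_iff.mpr hx₀ne), mul_comm]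
      exact hx₀.le
    set F' : Submodule ℝ E := F ⊔ Submodule.span ℝ {x} with hF'def
    have hF' : FiniteDimensional ℝ F' := by
      haveI := hF
      infer_instance
    obtain ⟨G, hG1, hG2⟩ := norming_finset F' hF'
    set K' : Submodule ℝ E := K ⊓ ⨅ f ∈ G, LinearMap.ker (f : E →ₗ[ℝ] ℝ) with hK'def
    refine ⟨x, F', K', hxmem, hxnorm, hTx, rfl, inf_le_left, hF', ?_, ?_⟩
    · have heq : M ⊓ K' = (M ⊓ K) ⊓ ⨅ f ∈ G, LinearMap.ker (f : E →ₗ[ℝ] ℝ) := by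
        rw [hK'def, inf_assoc]
      rw [heq]
      exact inf_ker_infdim _ hMK G
    · intro y hy v hv
      obtain ⟨f, hfG, hfy⟩ := hG2 y hy
      have hfv : f v = 0 := by
        have hv2 : v ∈ ⨅ f ∈ G, LinearMap.ker (f : E →ₗ[ℝ] ℝ) := (Submodule.mem_inf.mp hv).2
        simp only [Submodule.mem_iInf] at hv2
        have := hv2 f hfG
        simpa using this
      have : ‖f y‖ = ‖f (y + v)‖ := by rw [map_add, hfv, add_zero]
      calc ‖y‖ ≤ 2 * ‖f y‖ := hfy
      _ = 2 * ‖f (y + v)‖ := by rw [this]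
      _ ≤ 2 * (‖f‖ * ‖y + v‖) := by
          have := f.le_opNorm (y + v); linarith
      _ ≤ 2 * (1 * ‖y + v‖) := by
          have h1 := hG1 f hfG
          have h2 : (0:ℝ) ≤ ‖y + v‖ := norm_nonneg _
          nlinarith
      _ = 2 * ‖y + v‖ := by ring
  choose xc Fc Kc hx1 hx2 hx3 hFeq hKle hFfin hKinf hnormc using step
  -- the state sequence
  let St := {p : Submodule ℝ E × Submodule ℝ E //
    FiniteDimensional ℝ ↥p.1 ∧ ¬FiniteDimensional ℝ ↥(M ⊓ p.2) ∧
    ∀ y ∈ p.1, ∀ v ∈ p.2, ‖y‖ ≤ 2 * ‖y + v‖}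
  have hMtop : ¬FiniteDimensional ℝ ↥(M ⊓ (⊤ : Submodule ℝ E)) := by
    rw [inf_top_eq]; exact hM
  let base : St := ⟨(⊥, ⊤), inferInstance, hMtop, by
    intro y hy v hv
    rw [Submodule.mem_bot] at hy
    subst hy
    simp [norm_nonneg]⟩
  let next : ℕ → St → St := fun n s =>
    ⟨(Fc n s.1.1 s.1.2 s.2.1 s.2.2.1, Kc n s.1.1 s.1.2 s.2.1 s.2.2.1),
      hFfin n s.1.1 s.1.2 s.2.1 s.2.2.1, hKinf n s.1.1 s.1.2 s.2.1 s.2.2.1,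
      hnormc n s.1.1 s.1.2 s.2.1 s.2.2.1⟩
  let seq : ℕ → St := fun n => Nat.rec base next n
  have hseq : ∀ n, seq (n + 1) = next n (seq n) := fun _ => rfl
  let x : ℕ → E := fun n => xc n (seq n).1.1 (seq n).1.2 (seq n).2.1 (seq n).2.2.1
  have hx1' : ∀ n, x n ∈ M ⊓ (seq n).1.2 := fun n => hx1 n _ _ _ _
  have hx2' : ∀ n, ‖x n‖ = 1 := fun n => hx2 n _ _ _ _
  have hx3' : ∀ n, ‖T (x n)‖ ≤ ε / 2 ^ (n + 3) := fun n => hx3 n _ _ _ _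
  have hFeq' : ∀ n, (seq (n+1)).1.1 = (seq n).1.1 ⊔ Submodule.span ℝ {x n} :=
    fun n => hFeq n _ _ _ _
  have hKle' : ∀ n, (seq (n+1)).1.2 ≤ (seq n).1.2 := fun n => hKle n _ _ _ _
  have hnorm' : ∀ n, ∀ y ∈ (seq n).1.1, ∀ v ∈ (seq n).1.2, ‖y‖ ≤ 2 * ‖y + v‖ :=
    fun n => (seq n).2.2.2
  -- monotonicity
  have hKanti : ∀ m n, m ≤ n → (seq n).1.2 ≤ (seq m).1.2 := by
    intro m n hmn
    induction n, hmn using Nat.le_induction with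
    | base => exact le_rfl
    | succ n hmn ih => exact le_trans (hKle' n) ih
  have hFmono : ∀ m n, m ≤ n → (seq m).1.1 ≤ (seq n).1.1 := by
    intro m n hmn
    induction n, hmn using Nat.le_induction with
    | base => exact le_rfl
    | succ n hmn ih =>
        refine le_trans ih ?_
        rw [hFeq' n]
        exact le_sup_left
  have hxF : ∀ m n, m < n → x m ∈ (seq n).1.1 := by
    intro m n hmn
    have h1 : x m ∈ (seq (m+1)).1.1 := by
      rw [hFeq' m]
      exact Submodule.mem_sup_right (Submodule.mem_span_singleton_self _)
    exact hFmono (m+1) n hmn h1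
  have hxK : ∀ m n, m ≤ n → x n ∈ (seq m).1.2 :=
    fun m n hmn => hKanti m n hmn (hx1' n).2
  have hxM : ∀ n, x n ∈ M := fun n => (hx1' n).1
  clear hseq
  clear_value seq x
  -- partial sum estimate
  have key : ∀ (N : ℕ) (c : ℕ → ℝ) (m : ℕ), m ≤ N →
      ‖∑ i ∈ Finset.range m, c i • x i‖ ≤ 2 * ‖∑ i ∈ Finset.range N, c i • x i‖ := by
    intro N c m hmN
    have hsplit : ∑ i ∈ Finset.range m, c i • x i + ∑ i ∈ Finset.Ico m N, c i • x i
        = ∑ i ∈ Finset.range N, c i • x i := Finset.sum_range_add_sum_Ico _ hmN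
    have hu : ∑ i ∈ Finset.range m, c i • x i ∈ (seq m).1.1 := by
      refine Submodule.sum_mem _ fun i hi => Submodule.smul_mem _ _ ?_
      exact hxF i m (Finset.mem_range.mp hi)
    have hv : ∑ i ∈ Finset.Ico m N, c i • x i ∈ (seq m).1.2 := by
      refine Submodule.sum_mem _ fun i hi => Submodule.smul_mem _ _ ?_
      exact hxK m i (Finset.mem_Ico.mp hi).1
    have := hnorm' m _ hu _ hv
    rwa [hsplit] at this
  have coef : ∀ (N : ℕ) (c : ℕ → ℝ) (m : ℕ), m < N →
      |c m| ≤ 4 * ‖∑ i ∈ Finset.range N, c i • x i‖ := by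
    intro N c m hmN
    have h1 : |c m| = ‖c m • x m‖ := by
      rw [norm_smul, hx2' m, mul_one, Real.norm_eq_abs]
    have h2 : c m • x m = (∑ i ∈ Finset.range (m+1), c i • x i)
        - ∑ i ∈ Finset.range m, c i • x i := by
      rw [Finset.sum_range_succ]; abel
    have h3 := key N c (m+1) hmN
    have h4 := key N c m (le_of_lt hmN)
    rw [h1, h2]
    calc ‖(∑ i ∈ Finset.range (m+1), c i • x i) - ∑ i ∈ Finset.range m, c i • x i‖
        ≤ ‖∑ i ∈ Finset.range (m+1), c i • x i‖ + ‖∑ i ∈ Finset.range m, c i • x i‖ :=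
          norm_sub_le _ _
      _ ≤ 4 * ‖∑ i ∈ Finset.range N, c i • x i‖ := by linarith
  -- the norm bound on finite combinations
  have Tbound : ∀ (N : ℕ) (c : ℕ → ℝ),
      ‖T (∑ i ∈ Finset.range N, c i • x i)‖ ≤ ε * ‖∑ i ∈ Finset.range N, c i • x i‖ := by
    intro N c
    set S := ‖∑ i ∈ Finset.range N, c i • x i‖ with hS
    have hS0 : 0 ≤ S := norm_nonneg _
    calc ‖T (∑ i ∈ Finset.range N, c i • x i)‖
        = ‖∑ i ∈ Finset.range N, c i • T (x i)‖ := by rw [map_sum]; simp [map_smul]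
      _ ≤ ∑ i ∈ Finset.range N, ‖c i • T (x i)‖ := norm_sum_le _ _
      _ ≤ ∑ i ∈ Finset.range N, (4 * S) * (ε / 2 ^ (i + 3)) := by
          refine Finset.sum_le_sum fun i hi => ?_
          rw [norm_smul, Real.norm_eq_abs]
          have h1 := coef N c i (Finset.mem_range.mp hi)
          have h2 := hx3' i
          have h3 : (0:ℝ) ≤ |c i| := abs_nonneg _
          have h4 : (0:ℝ) ≤ ‖T (x i)‖ := norm_nonneg _
          have h5 : (0:ℝ) < ε / 2 ^ (i+3) := by positivity
          exact mul_le_mul h1 h2 h4 (by linarith)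
      _ = (4 * S) * (ε / 8) * ∑ i ∈ Finset.range N, (1/2 : ℝ) ^ i := by
          rw [Finset.mul_sum]
          refine Finset.sum_congr rfl fun i _ => ?_
          have h2 : (ε / 2 ^ (i+3)) = (ε/8) * (1/2:ℝ)^i := by
            have h3 : (2:ℝ)^(i+3) = 2^i * 8 := by rw [pow_add]; norm_num
            rw [h3, one_div, inv_pow, div_mul_eq_div_div_swap, div_eq_mul_inv]
          rw [h2]
          ring
      _ ≤ (4 * S) * (ε / 8) * 2 := by
          have h6 : (0:ℝ) ≤ (4 * S) * (ε / 8) := by positivity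
          exact mul_le_mul_of_nonneg_left (sum_geometric_two_le N) h6
      _ = ε * S := by ring
  -- conclusion
  refine ⟨Submodule.span ℝ (Set.range x), ?_, ?_, ?_⟩
  · rw [Submodule.span_le]
    rintro _ ⟨n, rfl⟩
    exact hxM n
  · -- linear independence
    intro hfin
    have hli : LinearIndependent ℝ x := by
      rw [linearIndependent_iff']
      intro s g hg i his
      obtain ⟨N, hN⟩ := s.exists_nat_subset_range
      set g' : ℕ → ℝ := fun j => if j ∈ s then g j else 0 with hg'def
      have hsum : ∑ j ∈ Finset.range N, g' j • x j = 0 := by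
        rw [← Finset.sum_subset hN]
        · rw [← hg]
          refine Finset.sum_congr rfl fun j hj => ?_
          simp [hg'def, hj]
        · intro j _ hjs
          simp [hg'def, hjs]
      have := coef N g' i (Finset.mem_range.mp (hN his))
      rw [hsum] at this
      simp only [norm_zero, mul_zero] at this
      have : g' i = 0 := abs_nonpos_iff.mp this
      simpa [hg'def, his] using this
    have hli2 : LinearIndependent ℝ
        (fun n => (⟨x n, Submodule.subset_span (Set.mem_range_self n)⟩ :
          ↥(Submodule.span ℝ (Set.range x)))) := by
      refine LinearIndependent.of_comp (Submodule.span ℝ (Set.range x)).subtype ?_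
      exact hli
    haveI := hli2.finite
    exact not_finite ℕ
  · intro y hy
    rw [Finsupp.mem_span_range_iff_exists_finsupp] at hy
    obtain ⟨c, hc⟩ := hy
    obtain ⟨N, hN⟩ := c.support.exists_nat_subset_range
    have hy' : y = ∑ i ∈ Finset.range N, c i • x i := by
      rw [← hc, Finsupp.sum]
      refine Finset.sum_subset hN ?_
      intro j _ hjs
      rw [Finsupp.notMem_support_iff] at hjs
      simp [hjs]
    rw [hy']
    exact Tbound N c

end Helpers

/-- A Banach space `E` is `𝒰`-subprojective for the family `Z`: every infinite-dimensional
closed subspace contains an infinite-dimensional closed subspace which is complemented in `E`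
and isomorphic to a member of the family. -/
def USubprojN (E : Type*) [NormedAddCommGroup E] [NormedSpace ℝ E]
    {κ : Type*} (Z : κ → Type*) [∀ k, NormedAddCommGroup (Z k)]
    [∀ k, NormedSpace ℝ (Z k)] : Prop :=
  ∀ V : Submodule ℝ E, IsClosed (V : Set E) → ¬ FiniteDimensional ℝ V →
    ∃ W : Submodule ℝ E, W ≤ V ∧ IsClosed (W : Set E) ∧ ¬ FiniteDimensional ℝ W ∧
      (∃ P : E →L[ℝ] E, LinearMap.range (P : E →ₗ[ℝ] E) = W ∧ ∀ x ∈ W, P x = x) ∧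
      ∃ k, Nonempty (↥W ≃L[ℝ] Z k)

set_option maxHeartbeats 1000000 in
set_option synthInstance.maxHeartbeats 100000 in
/-- A finite direct sum (with the max norm) of `𝒰ᵢ`-subprojective Banach spaces is
`⋃ᵢ 𝒰ᵢ`-subprojective. -/
theorem stmt12 {I : Type*} [Fintype I]
    (X : I → Type*) [∀ i, NormedAddCommGroup (X i)] [∀ i, NormedSpace ℝ (X i)]
    [∀ i, CompleteSpace (X i)]
    {κ : I → Type*} (Z : ∀ i, κ i → Type*)
    [∀ i k, NormedAddCommGroup (Z i k)] [∀ i k, NormedSpace ℝ (Z i k)]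
    [∀ i k, CompleteSpace (Z i k)]
    (hZ : ∀ i k, ¬ FiniteDimensional ℝ (Z i k))
    (h : ∀ i, USubprojN (X i) (Z i)) :
    USubprojN (∀ i, X i) (fun s : Σ i, κ i => Z s.1 s.2) := by
  classical
  intro V hVc hVfin
  by_cases hex : ∃ (i : I) (M : Submodule ℝ (∀ j, X j)) (c : ℝ),
      M ≤ V ∧ ¬FiniteDimensional ℝ M ∧ 0 < c ∧ ∀ x ∈ M, c * ‖x‖ ≤ ‖x i‖
  · -- main case
    obtain ⟨i, M, c, hMV, hMfin, hc, hlow⟩ := hex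
    set N : Submodule ℝ (∀ j, X j) := M.topologicalClosure with hNdef
    have hNV : N ≤ V := Submodule.topologicalClosure_minimal M hMV hVc
    have hNc : IsClosed (N : Set (∀ j, X j)) := Submodule.isClosed_topologicalClosure M
    have hNfin : ¬FiniteDimensional ℝ N := fun hfin =>
      hMfin (Submodule.finiteDimensional_of_le M.le_topologicalClosure)
    have hNlow : ∀ x ∈ N, c * ‖x‖ ≤ ‖x i‖ := by
      have hcl : IsClosed {x : ∀ j, X j | c * ‖x‖ ≤ ‖x i‖} :=
        isClosed_le (continuous_const.mul continuous_norm) ((continuous_apply i).norm)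
      have hsub : (M : Set (∀ j, X j)) ⊆ {x | c * ‖x‖ ≤ ‖x i‖} := fun x hx => hlow x hx
      have := closure_minimal hsub hcl
      rw [← Submodule.topologicalClosure_coe] at this
      exact fun x hx => this hx
    haveI : CompleteSpace ↥N := hNc.completeSpace_coe
    set φ : ↥N →L[ℝ] X i :=
      (ContinuousLinearMap.proj i).comp N.subtypeL with hφdef
    have hφval : ∀ y : ↥N, φ y = (y : ∀ j, X j) i := fun y => rfl
    have hφlow : ∀ y : ↥N, c * ‖y‖ ≤ ‖φ y‖ := fun y => hNlow y y.2
    have hφinj : ∀ y : ↥N, φ y = 0 → y = 0 := by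
      intro y hy
      have := hφlow y
      rw [hy, norm_zero] at this
      have : ‖y‖ ≤ 0 := by nlinarith
      exact norm_le_zero_iff.mp this
    have hanti : AntilipschitzWith (c⁻¹).toNNReal φ := by
      apply φ.antilipschitz_of_bound
      intro y
      rw [Real.coe_toNNReal _ (le_of_lt (inv_pos.mpr hc))]
      calc ‖y‖ = c⁻¹ * (c * ‖y‖) := by
            rw [← mul_assoc, inv_mul_cancel₀ (ne_of_gt hc), one_mul]
      _ ≤ c⁻¹ * ‖φ y‖ := mul_le_mul_of_nonneg_left (hφlow y) (le_of_lt (inv_pos.mpr hc))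
    have hφinj' : Function.Injective φ := by
      intro a b hab
      have : φ (a - b) = 0 := by rw [map_sub, hab, sub_self]
      have := hφinj _ this
      rwa [sub_eq_zero] at this
    have hrangeclosed : IsClosed (Set.range φ) := hanti.isClosed_range φ.uniformContinuous
    set Y : Submodule ℝ (X i) := LinearMap.range (φ : ↥N →ₗ[ℝ] X i) with hYdef
    have hYc : IsClosed (Y : Set (X i)) := by
      rw [hYdef]
      rw [LinearMap.coe_range]
      exact hrangeclosed
    set ψ : ↥N ≃L[ℝ] ↥Y := φ.equivRange hφinj' hrangeclosed with hψdef
    have hψval : ∀ y : ↥N, (ψ y : X i) = (y : ∀ j, X j) i := fun y => rfl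
    have hYfin : ¬FiniteDimensional ℝ Y := by
      intro hfin
      exact hNfin (Module.Finite.equiv ψ.symm.toLinearEquiv)
    haveI : CompleteSpace ↥Y := hYc.completeSpace_coe
    obtain ⟨W, hWY, hWc, hWfin, ⟨P, hPrange, hPfix⟩, k, ⟨e₀⟩⟩ := h i Y hYc hYfin
    -- the subspace W'
    set W' : Submodule ℝ (∀ j, X j) :=
      N ⊓ Submodule.comap ((ContinuousLinearMap.proj i : (∀ j, X j) →L[ℝ] X i) :
        (∀ j, X j) →ₗ[ℝ] X i) W with hW'def
    have hW'mem : ∀ x : ∀ j, X j, x ∈ W' ↔ x ∈ N ∧ x i ∈ W := by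
      intro x
      rw [hW'def, Submodule.mem_inf, Submodule.mem_comap]
      rfl
    have hPW : ∀ z : X i, P z ∈ W := by
      intro z
      rw [← hPrange]
      exact LinearMap.mem_range_self (P : X i →ₗ[ℝ] X i) z
    -- the projection Q
    set g2 : (∀ j, X j) →L[ℝ] ↥Y :=
      (P.comp (ContinuousLinearMap.proj i)).codRestrict Y (fun x => hWY (hPW (x i))) with hg2def
    set Q : (∀ j, X j) →L[ℝ] (∀ j, X j) :=
      N.subtypeL.comp ((ψ.symm : ↥Y →L[ℝ] ↥N).comp g2) with hQdef
    have hQval : ∀ x, Q x = ((ψ.symm ⟨P (x i), hWY (hPW (x i))⟩ : ↥N) : ∀ j, X j) :=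
      fun x => rfl
    have hψsymm : ∀ (x : ∀ j, X j) (hxN : x ∈ N) (hxW : x i ∈ W),
        (ψ.symm ⟨x i, hWY hxW⟩ : ↥N) = ⟨x, hxN⟩ := by
      intro x hxN hxW
      have : ψ ⟨x, hxN⟩ = ⟨x i, hWY hxW⟩ := Subtype.ext (hψval ⟨x, hxN⟩)
      rw [← this, ContinuousLinearEquiv.symm_apply_apply]
    have hQfix : ∀ x ∈ W', Q x = x := by
      intro x hx
      obtain ⟨hxN, hxW⟩ := (hW'mem x).mp hx
      rw [hQval]
      have hP : P (x i) = x i := hPfix _ hxW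
      have : (⟨P (x i), hWY (hPW (x i))⟩ : ↥Y) = ⟨x i, hWY hxW⟩ := Subtype.ext hP
      rw [this, hψsymm x hxN hxW]
    have hQmem : ∀ x, Q x ∈ W' := by
      intro x
      rw [hW'mem]
      constructor
      · rw [hQval]; exact (ψ.symm _).2
      · rw [hQval]
        have : ((ψ.symm ⟨P (x i), hWY (hPW (x i))⟩ : ↥N) : ∀ j, X j) i
            = ((ψ (ψ.symm ⟨P (x i), hWY (hPW (x i))⟩) : ↥Y) : X i) := rfl
        rw [this, ContinuousLinearEquiv.apply_symm_apply]
        exact hPW (x i)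
    have hQrange : LinearMap.range (Q : (∀ j, X j) →ₗ[ℝ] (∀ j, X j)) = W' := by
      apply le_antisymm
      · rintro _ ⟨x, rfl⟩
        exact hQmem x
      · intro x hx
        exact ⟨x, hQfix x hx⟩
    -- the isomorphism W' ≃L W
    have hWf1mem : ∀ x : ↥W', ((x : ∀ j, X j) i) ∈ W :=
      fun x => ((hW'mem x).mp x.2).2
    set f₁ : ↥W' →L[ℝ] ↥W :=
      ((ContinuousLinearMap.proj i).comp W'.subtypeL).codRestrict W hWf1mem with hf₁def
    have hWf2mem : ∀ w : ↥W,
        ((ψ.symm ⟨(w : X i), hWY w.2⟩ : ↥N) : ∀ j, X j) ∈ W' := by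
      intro w
      rw [hW'mem]
      refine ⟨(ψ.symm _).2, ?_⟩
      have : ((ψ.symm ⟨(w : X i), hWY w.2⟩ : ↥N) : ∀ j, X j) i
          = ((ψ (ψ.symm ⟨(w : X i), hWY w.2⟩) : ↥Y) : X i) := rfl
      rw [this, ContinuousLinearEquiv.apply_symm_apply]
      exact w.2
    set f₂ : ↥W →L[ℝ] ↥W' :=
      (N.subtypeL.comp ((ψ.symm : ↥Y →L[ℝ] ↥N).comp
        (W.subtypeL.codRestrict Y (fun w => hWY w.2)))).codRestrict W' hWf2mem with hf₂def
    have hf₁val : ∀ x : ↥W', (f₁ x : X i) = (x : ∀ j, X j) i := fun x => rfl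
    have hf₂val : ∀ w : ↥W,
        (f₂ w : ∀ j, X j) = ((ψ.symm ⟨(w : X i), hWY w.2⟩ : ↥N) : ∀ j, X j) :=
      fun w => rfl
    have hleft : Function.LeftInverse f₂ f₁ := by
      intro x
      obtain ⟨hxN, hxW⟩ := (hW'mem x).mp x.2
      apply Subtype.ext
      rw [hf₂val]
      have h1 : ((f₁ x : ↥W) : X i) = (x : ∀ j, X j) i := hf₁val x
      have h2 : (⟨((f₁ x : ↥W) : X i), hWY (f₁ x).2⟩ : ↥Y) = ⟨(x : ∀ j, X j) i, hWY hxW⟩ :=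
        Subtype.ext h1
      rw [h2, hψsymm x hxN hxW]
    have hright : Function.RightInverse f₂ f₁ := by
      intro w
      apply Subtype.ext
      rw [hf₁val, hf₂val]
      have : ((ψ.symm ⟨(w : X i), hWY w.2⟩ : ↥N) : ∀ j, X j) i
          = ((ψ (ψ.symm ⟨(w : X i), hWY w.2⟩) : ↥Y) : X i) := rfl
      rw [this, ContinuousLinearEquiv.apply_symm_apply]
    set e₂ : ↥W' ≃L[ℝ] ↥W := ContinuousLinearEquiv.equivOfInverse f₁ f₂ hleft hright
    have hW'fin : ¬FiniteDimensional ℝ W' := by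
      intro hfin
      exact hWfin (Module.Finite.equiv e₂.toLinearEquiv)
    have hW'c : IsClosed (W' : Set (∀ j, X j)) := by
      have : (W' : Set (∀ j, X j)) =
          (N : Set (∀ j, X j)) ∩ ((fun x : ∀ j, X j => x i) ⁻¹' (W : Set (X i))) := by
        ext x
        simp only [Set.mem_inter_iff, Set.mem_preimage, SetLike.mem_coe]
        exact hW'mem x
      rw [this]
      exact hNc.inter (hWc.preimage (continuous_apply i))
    exact ⟨W', le_trans inf_le_left hNV, hW'c, hW'fin, ⟨Q, hQrange, hQfix⟩,
      ⟨i, k⟩, ⟨e₂.trans e₀⟩⟩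
  · -- contradiction case
    exfalso
    push_neg at hex
    have Hss : ∀ (i : I) (N : Submodule ℝ (∀ j, X j)), N ≤ V → ¬FiniteDimensional ℝ N →
        ∀ c : ℝ, 0 < c → ∃ x ∈ N, ‖(ContinuousLinearMap.proj i :
          (∀ j, X j) →L[ℝ] X i) x‖ < c * ‖x‖ := by
      intro i N hNV hNfin c hc
      obtain ⟨x, hxN, hx⟩ := hex i N c hNV hNfin hc
      exact ⟨x, hxN, by simpa using hx⟩
    have claim : ∀ s : Finset I, ∃ M : Submodule ℝ (∀ j, X j), M ≤ V ∧
        ¬FiniteDimensional ℝ M ∧ ∀ i ∈ s, ∀ x ∈ M, ‖x i‖ ≤ (1/2) * ‖x‖ := by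
      intro s
      induction s using Finset.induction with
      | empty => exact ⟨V, le_rfl, hVfin, by simp⟩
      | @insert i s his ih =>
          obtain ⟨M, hMV, hMfin, hMs⟩ := ih
          obtain ⟨M', hM'M, hM'fin, hM'⟩ := small_subspace V
            (ContinuousLinearMap.proj i) (Hss i) M hMV hMfin (1/2) (by norm_num)
          refine ⟨M', le_trans hM'M hMV, hM'fin, ?_⟩
          intro j hj x hx
          rcases Finset.mem_insert.mp hj with rfl | hjs
          · simpa using hM' x hx
          · exact hMs j hjs x (hM'M hx)
    obtain ⟨M, hMV, hMfin, hM⟩ := claim Finset.univ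
    have hxne : ∃ x ∈ M, x ≠ (0 : ∀ j, X j) := by
      by_contra hall
      push_neg at hall
      apply hMfin
      have : M = ⊥ := by
        rw [Submodule.eq_bot_iff]
        exact hall
      rw [this]
      infer_instance
    obtain ⟨x, hxM, hxne⟩ := hxne
    have hb : ‖x‖ ≤ (1/2) * ‖x‖ := by
      apply pi_norm_le_iff_of_nonneg (by positivity) |>.mpr
      intro i
      exact hM i (Finset.mem_univ i) x hxM
    have : 0 < ‖x‖ := norm_pos_iff.mpr hxne
    linarith
end

section
/- Let X be a Banach space with unconditional basis ℬ = (x_j)_{j∈𝒩} and let (𝒩ₙ)_{n=1}^∞ be a partition of 𝒩 into finite sets. Suppose there is a constant C such that ‖∑ₙ fₙ‖ ≤ C‖∑ₙ gₙ‖ whenever fₙ, gₙ ∈ X satisfy ‖fₙ‖ ≤ ‖gₙ‖ and supp(fₙ) ∪ supp(gₙ) ⊆ 𝒩ₙ for all n. If ℬ_u = (uₙ) and ℬ_v = (vₙ) are semi-normalized sequences in X with supp(uₙ) ∪ supp(vₙ) ⊆ 𝒩ₙ for all n, then ℬ_u and ℬ_v are equivalent, and both [ℬ_u] and [ℬ_v]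 are complemented in X. -/
open Filter Topology

/-- A submodule is complemented if it is the range of a continuous linear projection. -/
def IsComplementedSub {X : Type*} [AddCommGroup X] [Module ℝ X] [TopologicalSpace X]
    (V : Submodule ℝ X) : Prop :=
  ∃ P : X →L[ℝ] X, LinearMap.range (P : X →ₗ[ℝ] X) = V ∧ ∀ x ∈ V, P x = x

/-- Two sequences are equivalent: a series of scalars converges along one iff along the other. -/
def SeqEquiv {X Y : Type*} [AddCommGroup X] [Module ℝ X] [TopologicalSpace X]
    [AddCommGroup Y] [Module ℝ Y] [TopologicalSpace Y] (u : ℕ → X) (v : ℕ → Y) : Prop :=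
  ∀ a : ℕ → ℝ,
    (∃ x : X, Tendsto (fun N => ∑ n ∈ Finset.range N, a n • u n) atTop (𝓝 x)) ↔
    (∃ y : Y, Tendsto (fun N => ∑ n ∈ Finset.range N, a n • v n) atTop (𝓝 y))

/-- `f` is supported in `s` with respect to the unconditional basis `b`. -/
def SuppIn {X ι : Type*} [AddCommGroup X] [Module ℝ X] [TopologicalSpace X]
    (b : ι → X) (s : Set ι) (f : X) : Prop :=
  ∃ a : ι → ℝ, (∀ i, i ∉ s → a i = 0) ∧ HasSum (fun i => a i • b i) f

lemma suppIn_zero {X ι : Type*} [AddCommGroup X] [Module ℝ X] [TopologicalSpace X]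
    (b : ι → X) (s : Set ι) : SuppIn b s (0 : X) :=
  ⟨0, fun _ _ => rfl, by simpa using hasSum_zero⟩

lemma suppIn_smul {X ι : Type*} [NormedAddCommGroup X] [NormedSpace ℝ X]
    {b : ι → X} {s : Set ι} {f : X} (r : ℝ) (h : SuppIn b s f) : SuppIn b s (r • f) := by
  obtain ⟨a, ha, hs⟩ := h
  refine ⟨fun i => r * a i, fun i hi => by simp [ha i hi], ?_⟩
  simpa [smul_smul] using hs.const_smul r

set_option maxHeartbeats 2000000 in
/-- Semi-normalized sequences supported along a fixed partition into finite sets are equivalent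
and span complemented subspaces. -/
theorem stmt17 {X ι : Type*} [NormedAddCommGroup X] [NormedSpace ℝ X] [CompleteSpace X]
    (b : ι → X) (hb : ∀ x : X, ∃! a : ι → ℝ, HasSum (fun i => a i • b i) x)
    (N : ℕ → Set ι) (hNfin : ∀ n, (N n).Finite)
    (hNdisj : ∀ m n, m ≠ n → Disjoint (N m) (N n)) (hNcover : (⋃ n, N n) = Set.univ)
    (C : ℝ)
    (hC : ∀ f g : ℕ → X, (∀ n, SuppIn b (N n) (f n)) → (∀ n, SuppIn b (N n) (g n)) →
      (∀ n, ‖f n‖ ≤ ‖g n‖) → ∀ sf sg : X, HasSum f sf → HasSum g sg → ‖sf‖ ≤ C * ‖sg‖)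
    (u v : ℕ → X) (hu : ∀ n, SuppIn b (N n) (u n)) (hv : ∀ n, SuppIn b (N n) (v n))
    (hsemi : ∃ c C' : ℝ, 0 < c ∧
      ∀ n, c ≤ ‖u n‖ ∧ ‖u n‖ ≤ C' ∧ c ≤ ‖v n‖ ∧ ‖v n‖ ≤ C') :
    SeqEquiv u v ∧
    IsComplementedSub (Submodule.span ℝ (Set.range u)).topologicalClosure ∧
    IsComplementedSub (Submodule.span ℝ (Set.range v)).topologicalClosure := by
  classical
  obtain ⟨c, C', hc, hsn⟩ := hsemi
  have hu0 : ∀ n, u n ≠ 0 := fun n => norm_pos_iff.mp (lt_of_lt_of_le hc (hsn n).1)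
  have hv0 : ∀ n, v n ≠ 0 := fun n => norm_pos_iff.mp (lt_of_lt_of_le hc (hsn n).2.2.1)
  have hC'pos : 0 < C' := lt_of_lt_of_le hc (le_trans (hsn 0).1 (hsn 0).2.1)
  -- coefficient functionals
  choose coeff hcoeff using fun x => (hb x).exists
  have huniq : ∀ (x : X) (a : ι → ℝ), HasSum (fun i => a i • b i) x → a = coeff x :=
    fun x a h => (hb x).unique h (hcoeff x)
  -- classifying map for the partition
  have hecover : ∀ i : ι, ∃ n, i ∈ N n := by
    intro i
    have : i ∈ ⋃ n, N n := hNcover ▸ Set.mem_univ i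
    simpa using this
  choose e he using hecover
  have hfiber : ∀ n, {i | e i = n} = N n := by
    intro n
    ext i
    simp only [Set.mem_setOf_eq]
    constructor
    · rintro rfl; exact he i
    · intro hi
      by_contra hne
      exact Set.disjoint_left.mp (hNdisj _ _ hne) (he i) hi
  -- the block projections (as bare functions)
  set F : ℕ → Finset ι := fun n => (hNfin n).toFinset with hF
  have hmemF : ∀ n i, i ∈ F n ↔ i ∈ N n := fun n i => (hNfin n).mem_toFinset
  set E : ℕ → X → X := fun n x => ∑ i ∈ F n, coeff x i • b i with hE
  have hEsupp : ∀ n x, SuppIn b (N n) (E n x) := by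
    intro n x
    refine ⟨fun i => if i ∈ N n then coeff x i else 0, fun i hi => if_neg hi, ?_⟩
    have h1 : ∀ i ∉ F n, (if i ∈ N n then coeff x i else 0) • b i = 0 := by
      intro i hi
      rw [if_neg (fun h => hi ((hmemF n i).mpr h)), zero_smul]
    have h2 : HasSum (fun i => (if i ∈ N n then coeff x i else 0) • b i)
        (∑ i ∈ F n, (if i ∈ N n then coeff x i else 0) • b i) := hasSum_sum_of_ne_finset_zero h1
    have h3 : ∑ i ∈ F n, (if i ∈ N n then coeff x i else 0) • b i = E n x := by
      refine Finset.sum_congr rfl fun i hi => ?_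
      rw [if_pos ((hmemF n i).mp hi)]
    rwa [h3] at h2
  have hsuppCoeff : ∀ (s : Set ι) (f : X), SuppIn b s f → ∀ i, i ∉ s → coeff f i = 0 := by
    intro s f ⟨a, ha, hsum⟩ i hi
    rw [← huniq f a hsum]; exact ha i hi
  have hEeq : ∀ n (f : X), SuppIn b (N n) f → E n f = f := by
    intro n f hf
    have h1 : ∀ i ∉ F n, coeff f i • b i = 0 := by
      intro i hi
      rw [hsuppCoeff _ _ hf i (fun h => hi ((hmemF n i).mpr h)), zero_smul]
    exact (hasSum_sum_of_ne_finset_zero h1).unique (hcoeff f)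
  have hEzero : ∀ m n (f : X), SuppIn b (N m) f → m ≠ n → E n f = 0 := by
    intro m n f hf hmn
    refine Finset.sum_eq_zero fun i hi => ?_
    have hin : i ∈ N n := (hmemF n i).mp hi
    have : i ∉ N m := fun h => Set.disjoint_left.mp (hNdisj m n hmn) h hin
    rw [hsuppCoeff _ _ hf i this, zero_smul]
  have hcoeff_add : ∀ x y : X, coeff (x + y) = fun i => coeff x i + coeff y i := by
    intro x y
    refine (huniq (x + y) _ ?_).symm
    have := (hcoeff x).add (hcoeff y)
    simpa [add_smul] using this
  have hcoeff_smul : ∀ (r : ℝ) (x : X), coeff (r • x) = fun i => r * coeff x i := by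
    intro r x
    refine (huniq (r • x) _ ?_).symm
    have := (hcoeff x).const_smul r
    simpa [smul_smul] using this
  have hEadd : ∀ n (x y : X), E n (x + y) = E n x + E n y := by
    intro n x y
    simp only [hE, hcoeff_add, add_smul, Finset.sum_add_distrib]
  have hEsmul : ∀ n (r : ℝ) (x : X), E n (r • x) = r • E n x := by
    intro n r x
    simp only [hE, hcoeff_smul, Finset.smul_sum, smul_smul]
  -- block decomposition of an arbitrary vector
  have hEblocks : ∀ x : X, HasSum (fun n => E n x) x := by
    intro x
    have h0 : HasSum (fun i => coeff x i • b i) x := hcoeff x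
    have h1 : HasSum (fun p : (n : ℕ) × {i : ι // e i = n} =>
        coeff x p.2.1 • b p.2.1) x := ((Equiv.sigmaFiberEquiv e).hasSum_iff).mpr h0
    refine h1.sigma fun n => ?_
    haveI : Fintype {i : ι // e i = n} := by
      have hfin : Set.Finite {i | e i = n} := hfiber n ▸ hNfin n
      exact hfin.fintype
    have h2 := hasSum_fintype (fun c : {i : ι // e i = n} => coeff x c.1 • b c.1)
    have h3 : ∑ i ∈ F n, coeff x i • b i =
        ∑ c : {i : ι // e i = n}, coeff x c.1 • b c.1 := by
      refine Finset.sum_subtype (F n) (fun i => ?_) (fun i => coeff x i • b i)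
      rw [hmemF n i, ← hfiber n]; rfl
    show HasSum (fun c : {i : ι // e i = n} => coeff x c.1 • b c.1) (E n x)
    have h4 : E n x = ∑ i ∈ F n, coeff x i • b i := rfl
    rw [h4, h3]
    exact h2
  -- comparison over finite sets
  have hcmp : ∀ f g : ℕ → X, (∀ n, SuppIn b (N n) (f n)) → (∀ n, SuppIn b (N n) (g n)) →
      (∀ n, ‖f n‖ ≤ ‖g n‖) → ∀ G : Finset ℕ, ‖∑ n ∈ G, f n‖ ≤ C * ‖∑ n ∈ G, g n‖ := by
    intro f g hf hg hle G
    have hfs : HasSum (fun n => if n ∈ G then f n else 0) (∑ n ∈ G, f n) := by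
      have h1 : HasSum (fun n => if n ∈ G then f n else 0)
          (∑ n ∈ G, (if n ∈ G then f n else 0)) := hasSum_sum_of_ne_finset_zero
        (f := fun n => if n ∈ G then f n else 0) (s := G) (fun i hi => if_neg hi)
      have h2 : ∑ n ∈ G, (if n ∈ G then f n else 0) = ∑ n ∈ G, f n :=
        Finset.sum_congr rfl fun n hn => if_pos hn
      rwa [h2] at h1
    have hgs : HasSum (fun n => if n ∈ G then g n else 0) (∑ n ∈ G, g n) := by
      have h1 : HasSum (fun n => if n ∈ G then g n else 0)
          (∑ n ∈ G, (if n ∈ G then g n else 0)) := hasSum_sum_of_ne_finset_zero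
        (f := fun n => if n ∈ G then g n else 0) (s := G) (fun i hi => if_neg hi)
      have h2 : ∑ n ∈ G, (if n ∈ G then g n else 0) = ∑ n ∈ G, g n :=
        Finset.sum_congr rfl fun n hn => if_pos hn
      rwa [h2] at h1
    refine hC _ _ (fun n => ?_) (fun n => ?_) (fun n => ?_) _ _ hfs hgs
    · by_cases h : n ∈ G
      · simpa [h] using hf n
      · simpa [h] using suppIn_zero b (N n)
    · by_cases h : n ∈ G
      · simpa [h] using hg n
      · simpa [h] using suppIn_zero b (N n)
    · by_cases h : n ∈ G
      · simpa [h] using hle n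
      · simp [h]
  -- C is at least 1
  have hC1 : 1 ≤ C := by
    have hfs : HasSum (fun k => if k = 0 then u 0 else 0) (u 0) := hasSum_ite_eq 0 (u 0)
    have hsp : ∀ k, SuppIn b (N k) (if k = 0 then u 0 else 0) := by
      intro k
      by_cases h : k = 0
      · subst h; simpa using hu 0
      · simpa [h] using suppIn_zero b (N k)
    have h := hC _ _ hsp hsp (fun k => le_refl _) _ _ hfs hfs
    have hpos : 0 < ‖u 0‖ := lt_of_lt_of_le hc (hsn 0).1
    nlinarith
  have hC0 : 0 ≤ C := le_trans zero_le_one hC1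
  -- norm of blocks is controlled
  have hEbound : ∀ n (x : X), ‖E n x‖ ≤ C * ‖x‖ := by
    intro n x
    have hfs : HasSum (fun k => if k = n then E n x else 0) (E n x) := hasSum_ite_eq n (E n x)
    refine hC _ _ (fun k => ?_) (fun k => hEsupp k x) (fun k => ?_) _ _ hfs (hEblocks x)
    · by_cases h : k = n
      · subst h; simpa using hEsupp k x
      · simpa [h] using suppIn_zero b (N k)
    · by_cases h : k = n
      · subst h; simp
      · simp [h]
  -- the key projection construction
  have key : ∀ w : ℕ → X, (∀ n, SuppIn b (N n) (w n)) → (∀ n, w n ≠ 0) →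
      IsComplementedSub (Submodule.span ℝ (Set.range w)).topologicalClosure := by
    intro w hw hw0
    choose φ hφ1 hφw using fun n => exists_dual_vector ℝ (w n) (norm_ne_zero_iff.mpr (hw0 n))
    set ws : ℕ → X → ℝ := fun n x => ‖w n‖⁻¹ * φ n (E n x) with hws
    have hwnorm : ∀ n, ‖w n‖ ≠ 0 := fun n => norm_ne_zero_iff.mpr (hw0 n)
    have hwsle : ∀ n (x : X), ‖ws n x • w n‖ ≤ ‖E n x‖ := by
      intro n x
      have hwse : ws n x = ‖w n‖⁻¹ * φ n (E n x) := rfl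
      rw [norm_smul, Real.norm_eq_abs, hwse]
      have h1 : |‖w n‖⁻¹ * φ n (E n x)| * ‖w n‖ = |φ n (E n x)| := by
        rw [abs_mul, abs_inv, abs_norm, mul_comm (‖w n‖⁻¹), mul_assoc,
          inv_mul_cancel₀ (hwnorm n), mul_one]
      rw [h1]
      have h2 := (φ n).le_opNorm (E n x)
      rwa [Real.norm_eq_abs, hφ1, one_mul] at h2
    have hws_self : ∀ n, ws n (w n) = 1 := by
      intro n
      show ‖w n‖⁻¹ * φ n (E n (w n)) = 1
      rw [hEeq n (w n) (hw n), hφw n]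
      exact inv_mul_cancel₀ (hwnorm n)
    have hws_ne : ∀ m n, m ≠ n → ws n (w m) = 0 := by
      intro m n hmn
      show ‖w n‖⁻¹ * φ n (E n (w m)) = 0
      rw [hEzero m n (w m) (hw m) hmn, map_zero, mul_zero]
    -- summability of the projected series
    have hsummable : ∀ x : X, Summable fun n => ws n x • w n := by
      intro x
      rw [summable_iff_vanishing]
      intro s hs
      obtain ⟨ε, hε, hball⟩ := Metric.mem_nhds_iff.mp hs
      have hsumE : Summable fun n => E n x := (hEblocks x).summable
      obtain ⟨G, hG⟩ := (summable_iff_vanishing.mp hsumE) (Metric.ball 0 (ε / (C + 1)))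
        (Metric.ball_mem_nhds 0 (by positivity))
      refine ⟨G, fun t ht => hball ?_⟩
      have h1 := hcmp (fun n => ws n x • w n) (fun n => E n x)
        (fun n => suppIn_smul _ (hw n)) (fun n => hEsupp n x) (fun n => hwsle n x) t
      have h2 : ‖∑ n ∈ t, E n x‖ < ε / (C + 1) := by
        have := hG t ht
        rwa [Metric.mem_ball, dist_zero_right] at this
      rw [Metric.mem_ball, dist_zero_right]
      have h3 : C * ‖∑ n ∈ t, E n x‖ ≤ C * (ε / (C + 1)) :=
        mul_le_mul_of_nonneg_left (le_of_lt h2) hC0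
      have h4 : C * (ε / (C + 1)) < ε := by
        have h5 : ε / (C + 1) * (C + 1) = ε := div_mul_cancel₀ _ (by positivity)
        nlinarith [div_pos hε (show (0:ℝ) < C + 1 by positivity)]
      linarith
    -- the projection as a linear map
    set P0 : X →ₗ[ℝ] X :=
      { toFun := fun x => ∑' n, ws n x • w n
        map_add' := by
          intro x y
          have h1 : ∀ n, ws n (x + y) • w n = ws n x • w n + ws n y • w n := by
            intro n
            show (‖w n‖⁻¹ * φ n (E n (x + y))) • w n = _
            rw [hEadd, map_add, mul_add, add_smul]
          simp only [h1]
          exact Summable.tsum_add (hsummable x) (hsummable y)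
        map_smul' := by
          intro r x
          have h1 : ∀ n, ws n (r • x) • w n = r • (ws n x • w n) := by
            intro n
            show (‖w n‖⁻¹ * φ n (E n (r • x))) • w n = r • ((‖w n‖⁻¹ * φ n (E n x)) • w n)
            rw [hEsmul, map_smul, smul_eq_mul, smul_smul, mul_left_comm]
          simp only [h1, RingHom.id_apply]
          exact ((hsummable x).hasSum.const_smul r).tsum_eq } with hP0
    have hP0app : ∀ x : X, P0 x = ∑' n, ws n x • w n := fun x => rfl
    have hPle : ∀ x : X, ‖P0 x‖ ≤ C * ‖x‖ := by
      intro x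
      have hhs : HasSum (fun n => ws n x • w n) (P0 x) := (hsummable x).hasSum
      refine le_of_tendsto' hhs.norm fun G => ?_
      have hfs : HasSum (fun n => if n ∈ G then ws n x • w n else 0)
          (∑ n ∈ G, ws n x • w n) := by
        have h1 : HasSum (fun n => if n ∈ G then ws n x • w n else 0)
          (∑ n ∈ G, (if n ∈ G then ws n x • w n else 0)) := hasSum_sum_of_ne_finset_zero
          (f := fun n => if n ∈ G then ws n x • w n else 0) (s := G) (fun i hi => if_neg hi)
        have h2 : ∑ n ∈ G, (if n ∈ G then ws n x • w n else 0) = ∑ n ∈ G, ws n x • w n :=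
          Finset.sum_congr rfl fun n hn => if_pos hn
        rwa [h2] at h1
      refine hC _ _ (fun n => ?_) (fun n => hEsupp n x) (fun n => ?_) _ _ hfs (hEblocks x)
      · by_cases h : n ∈ G
        · simpa [h] using suppIn_smul (ws n x) (hw n)
        · simpa [h] using suppIn_zero b (N n)
      · by_cases h : n ∈ G
        · simpa [h] using hwsle n x
        · simp [h]
    set P : X →L[ℝ] X := P0.mkContinuous C hPle with hP
    have hPapp : ∀ x : X, P x = P0 x := fun x => rfl
    have hPw : ∀ m, P0 (w m) = w m := by
      intro m
      rw [hP0app]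
      have h1 : (fun n => ws n (w m) • w n) = fun n => if n = m then w m else 0 := by
        funext n
        rcases eq_or_ne n m with rfl | hne
        · rw [hws_self n, one_smul, if_pos rfl]
        · rw [hws_ne m n (Ne.symm hne), zero_smul, if_neg hne]
      rw [h1, tsum_ite_eq]
    have hPmem : ∀ x : X, P0 x ∈ (Submodule.span ℝ (Set.range w)).topologicalClosure := by
      intro x
      have hhs : HasSum (fun n => ws n x • w n) (P0 x) := (hsummable x).hasSum
      have hmem : P0 x ∈ closure (↑(Submodule.span ℝ (Set.range w)) : Set X) := by
        refine mem_closure_of_tendsto hhs (Filter.Eventually.of_forall fun G => ?_)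
        exact Submodule.sum_mem _ fun n _ =>
          Submodule.smul_mem _ _ (Submodule.subset_span ⟨n, rfl⟩)
      rwa [← Submodule.topologicalClosure_coe] at hmem
    have hfix : ∀ x ∈ (Submodule.span ℝ (Set.range w)).topologicalClosure, P x = x := by
      have hspan : ∀ x ∈ Submodule.span ℝ (Set.range w), P x = x := by
        intro x hx
        induction hx using Submodule.span_induction with
        | mem y h => obtain ⟨m, rfl⟩ := h; exact hPw m
        | zero => simp
        | add y z hy hz ihy ihz => rw [map_add, ihy, ihz]
        | smul r y hy ihy => rw [map_smul, ihy]
      intro x hx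
      have hclosed : IsClosed {x : X | P x = x} := isClosed_eq P.continuous continuous_id
      have hsub : (↑(Submodule.span ℝ (Set.range w)) : Set X) ⊆ {x : X | P x = x} :=
        fun y hy => hspan y hy
      have hmin := closure_minimal hsub hclosed
      have hx' : x ∈ closure (↑(Submodule.span ℝ (Set.range w)) : Set X) := by
        rw [← Submodule.topologicalClosure_coe]; exact hx
      exact hmin hx'
    refine ⟨P, ?_, hfix⟩
    apply le_antisymm
    · rintro x ⟨y, rfl⟩
      exact hPmem y
    · intro x hx
      exact ⟨x, hfix x hx⟩
  -- the Cauchy comparison direction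
  have dir : ∀ w w' : ℕ → X, (∀ n, SuppIn b (N n) (w n)) → (∀ n, SuppIn b (N n) (w' n)) →
      ∀ K : ℝ, 0 ≤ K → (∀ n, ‖w n‖ ≤ K * ‖w' n‖) →
      ∀ a : ℕ → ℝ, (∃ x, Tendsto (fun M => ∑ n ∈ Finset.range M, a n • w' n) atTop (𝓝 x)) →
      (∃ y, Tendsto (fun M => ∑ n ∈ Finset.range M, a n • w n) atTop (𝓝 y)) := by
    intro w w' hw hw' K hK hKle a ⟨x, hx⟩
    have hcauchy : CauchySeq (fun M => ∑ n ∈ Finset.range M, a n • w' n) := hx.cauchySeq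
    have key2 : ∀ M M', M ≤ M' →
        ‖∑ n ∈ Finset.range M', a n • w n - ∑ n ∈ Finset.range M, a n • w n‖ ≤
        C * K * ‖∑ n ∈ Finset.range M', a n • w' n - ∑ n ∈ Finset.range M, a n • w' n‖ := by
      intro M M' h
      rw [← Finset.sum_Ico_eq_sub _ h, ← Finset.sum_Ico_eq_sub _ h]
      have h1 := hcmp (fun n => a n • w n) (fun n => K • (a n • w' n))
        (fun n => suppIn_smul _ (hw n))
        (fun n => suppIn_smul _ (suppIn_smul _ (hw' n)))
        (fun n => by
          simp only [norm_smul, Real.norm_eq_abs, abs_of_nonneg hK]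
          nlinarith [mul_le_mul_of_nonneg_left (hKle n) (abs_nonneg (a n))])
        (Finset.Ico M M')
      rwa [← Finset.smul_sum, norm_smul, Real.norm_eq_abs, abs_of_nonneg hK, ← mul_assoc]
        at h1
    have hs : CauchySeq (fun M => ∑ n ∈ Finset.range M, a n • w n) := by
      rw [Metric.cauchySeq_iff] at hcauchy ⊢
      intro ε hε
      obtain ⟨B, hB⟩ := hcauchy (ε / (C * K + 1)) (by positivity)
      refine ⟨B, fun m hm n hn => ?_⟩
      have hwlog : ∀ m n : ℕ, B ≤ m → B ≤ n → n ≤ m →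
          dist (∑ k ∈ Finset.range m, a k • w k) (∑ k ∈ Finset.range n, a k • w k) < ε := by
        intro m n hm hn hnm
        have h1 := key2 n m hnm
        have h2 := hB m hm n hn
        rw [dist_eq_norm] at h2 ⊢
        have hCK : 0 ≤ C * K := mul_nonneg hC0 hK
        have h3 : C * K * ‖∑ k ∈ Finset.range m, a k • w' k - ∑ k ∈ Finset.range n, a k • w' k‖
            ≤ C * K * (ε / (C * K + 1)) := mul_le_mul_of_nonneg_left (le_of_lt h2) hCK
        have h4 : C * K * (ε / (C * K + 1)) < ε := by
          have h5 : ε / (C * K + 1) * (C * K + 1) = ε := div_mul_cancel₀ _ (by positivity)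
          nlinarith [div_pos hε (show (0:ℝ) < C * K + 1 by positivity)]
        linarith
      rcases le_total n m with h | h
      · exact hwlog m n hm hn h
      · rw [dist_comm]; exact hwlog n m hn hm h
    exact cauchySeq_tendsto_of_complete hs
  have hKuv : ∀ n, ‖u n‖ ≤ C' / c * ‖v n‖ := by
    intro n
    have h1 : C' / c * c = C' := div_mul_cancel₀ _ (ne_of_gt hc)
    have h2 : 0 ≤ C' / c := le_of_lt (div_pos hC'pos hc)
    nlinarith [(hsn n).2.1, (hsn n).2.2.1, mul_le_mul_of_nonneg_left (hsn n).2.2.1 h2]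
  have hKvu : ∀ n, ‖v n‖ ≤ C' / c * ‖u n‖ := by
    intro n
    have h1 : C' / c * c = C' := div_mul_cancel₀ _ (ne_of_gt hc)
    have h2 : 0 ≤ C' / c := le_of_lt (div_pos hC'pos hc)
    nlinarith [(hsn n).2.2.2, (hsn n).1, mul_le_mul_of_nonneg_left (hsn n).1 h2]
  have hKnonneg : 0 ≤ C' / c := le_of_lt (div_pos hC'pos hc)
  refine ⟨fun a => ⟨fun h => dir v u hv hu (C' / c) hKnonneg hKvu a h,
    fun h => dir u v hu hv (C' / c) hKnonneg hKuv a h⟩, key u hu hu0, key v hv hv0⟩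
end
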